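/- Let γ = (γ_α)_{α∈[0,∞)ⁿ} be a continuous family of nonnegative numbers and suppose there exist two positive Borel measures μ₁, μ₂ on [0,∞)ⁿ, both supported in E = ⋂ₖ pₖ^{-1}([0,∞)) for real fractional polynomials p₁, …, p_m, with γ_α = ∫ t^α dμᵢ for all α ∈ [0,∞)ⁿ and i = 1, 2. If moreover the induced extended families δᵢ_{(α,β)} = ∫ t^α θ(t)^β dμᵢ (θ(t) = (1+Σtⱼ²+Σpₖ(t)²)^{-1}) coincide, i.e., δ¹ = δ², then μ₁ = μ₂. -/

import Mathlib

open MeasureTheory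
open scoped ComplexOrder

/-- Points of `[0,∞)ⁿ`. -/
abbrev NNVec (n : ℕ) := {t : Fin n → ℝ // ∀ j, 0 ≤ t j}

/-- The real fractional monomial `t ↦ t^α = t₁^{α₁} ⋯ tₙ^{αₙ}` on `[0,∞)ⁿ`
(real powers; the convention `0^0 = 1` is in force). -/
noncomputable def fracMonoR {n : ℕ} (α : Fin n → ℚ) (t : NNVec n) : ℝ :=
  ∏ j, (t.1 j) ^ ((α j : ℝ))

/-- The fractional monomial `t ↦ t^α`, regarded as a complex-valued function. -/
noncomputable def fracMono {n : ℕ} (α : Fin n → ℚ) (t : NNVec n) : ℂ :=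
  ((fracMonoR α t : ℝ) : ℂ)

/-- The set of fractional monomials with nonnegative rational exponents. -/
def fracMonoSet (n : ℕ) : Set (NNVec n → ℂ) :=
  {f | ∃ α : Fin n → ℚ, (∀ j, 0 ≤ α j) ∧ f = fracMono α}

/-- `Qₙ`: the complex algebra of "fractional polynomials" on `[0,∞)ⁿ`, i.e. the algebra
generated by the fractional monomials `t^α`, `α ∈ (ℚ₊)ⁿ`. -/
noncomputable def QAlg (n : ℕ) : Subalgebra ℂ (NNVec n → ℂ) :=
  Algebra.adjoin ℂ (fracMonoSet n)

/-- A real-valued function on `[0,∞)ⁿ` is a *real fractional polynomial* if, viewed as a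
complex-valued function, it belongs to `Qₙ`. -/
def IsRealFracPoly {n : ℕ} (p : NNVec n → ℝ) : Prop :=
  (fun t => ((p t : ℝ) : ℂ)) ∈ QAlg n

/-- `θ_p(t) = (1 + t₁² + ⋯ + tₙ² + p₁(t)² + ⋯ + p_m(t)²)⁻¹`. -/
noncomputable def thetaFn {n m : ℕ} (p : Fin m → (NNVec n → ℝ)) (t : NNVec n) : ℝ :=
  (1 + ∑ j, (t.1 j) ^ 2 + ∑ k, (p k t) ^ 2)⁻¹

/-- `R`: the complex algebra generated by `Qₙ` together with the function `θ_p`. -/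
noncomputable def RAlg (n m : ℕ) (p : Fin m → (NNVec n → ℝ)) : Subalgebra ℂ (NNVec n → ℂ) :=
  Algebra.adjoin ℂ (fracMonoSet n ∪ {fun t => ((thetaFn p t : ℝ) : ℂ)})


section Aux

variable {n : ℕ}

lemma continuous_fracMonoR (α : Fin n → ℚ) (hα : ∀ j, 0 ≤ α j) :
    Continuous (fracMonoR α) := by
  unfold fracMonoR
  apply continuous_finset_prod
  intro j _
  rw [continuous_iff_continuousAt]
  intro t
  exact (Real.continuousAt_rpow_const _ _ (Or.inr (by exact_mod_cast hα j))).comp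
    ((continuous_apply j).comp continuous_subtype_val).continuousAt

lemma continuous_of_mem_QAlg {f : NNVec n → ℂ} (hf : f ∈ QAlg n) : Continuous f := by
  induction hf using Algebra.adjoin_induction with
  | mem g hg =>
    obtain ⟨α, hα, rfl⟩ := hg
    exact Complex.continuous_ofReal.comp (continuous_fracMonoR α hα)
  | algebraMap r => exact continuous_const
  | add x y hx hy hx' hy' => exact hx'.add hy'
  | mul x y hx hy hx' hy' => exact hx'.mul hy'

lemma continuous_of_isRealFracPoly {q : NNVec n → ℝ} (hq : IsRealFracPoly q) :
    Continuous q := by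
  have h := continuous_of_mem_QAlg hq
  have : q = fun t => ((fun t => ((q t : ℝ) : ℂ)) t).re := by
    funext t; simp
  rw [this]
  exact Complex.continuous_re.comp h

lemma fracMonoR_add (α α' : Fin n → ℚ) (hα : ∀ j, 0 ≤ α j) (hα' : ∀ j, 0 ≤ α' j) (t : NNVec n) :
    fracMonoR (α + α') t = fracMonoR α t * fracMonoR α' t := by
  unfold fracMonoR
  rw [← Finset.prod_mul_distrib]
  apply Finset.prod_congr rfl
  intro j _
  have : ((α j + α' j : ℚ) : ℝ) = (α j : ℝ) + (α' j : ℝ) := by push_cast; ring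
  rw [Pi.add_apply, this, Real.rpow_add_of_nonneg (t.2 j) (by exact_mod_cast hα j) (by exact_mod_cast hα' j)]

lemma fracMonoR_zero (t : NNVec n) : fracMonoR (0 : Fin n → ℚ) t = 1 := by
  unfold fracMonoR
  simp [Real.rpow_zero]

end Aux

/-- Let `γ = (γ_α)_{α∈[0,∞)ⁿ}` be a continuous family of nonnegative numbers
and let `μ₁, μ₂` be positive Borel measures on `[0,∞)ⁿ`, both carried by
`E = ⋂ₖ pₖ⁻¹([0,∞))` for real fractional polynomials `p₁, …, p_m`, with
`γ_α = ∫ t^α dμᵢ` for all `α ∈ [0,∞)ⁿ`, `i = 1, 2`.  If the induced extended families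
coincide, i.e. `∫ t^α θ(t)^β dμ₁ = ∫ t^α θ(t)^β dμ₂` for all `α ∈ (ℚ₊)ⁿ`, `β ∈ ℤ₊`, where
`θ(t) = (1 + Σⱼ tⱼ² + Σₖ pₖ(t)²)⁻¹`, then `μ₁ = μ₂`. -/
theorem measure_unique_of_delta_families_coincide (n m : ℕ)
    (p : Fin m → (NNVec n → ℝ)) (hp : ∀ k, IsRealFracPoly (p k))
    (γ : NNVec n → ℝ) (hγcont : Continuous γ) (hγpos : ∀ α, 0 ≤ γ α)
    (μ₁ μ₂ : Measure (NNVec n))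
    (hsupp₁ : ∀ k, μ₁ {t : NNVec n | p k t < 0} = 0)
    (hsupp₂ : ∀ k, μ₂ {t : NNVec n | p k t < 0} = 0)
    (hmom₁ : ∀ α : NNVec n, Integrable (fun t : NNVec n => ∏ j, (t.1 j) ^ (α.1 j)) μ₁)
    (hmom₂ : ∀ α : NNVec n, Integrable (fun t : NNVec n => ∏ j, (t.1 j) ^ (α.1 j)) μ₂)
    (hrep₁ : ∀ α : NNVec n, γ α = ∫ t, (∏ j, (t.1 j) ^ (α.1 j)) ∂μ₁)
    (hrep₂ : ∀ α : NNVec n, γ α = ∫ t, (∏ j, (t.1 j) ^ (α.1 j)) ∂μ₂)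
    (hδ : ∀ α : Fin n → ℚ, (∀ j, 0 ≤ α j) → ∀ β : ℕ,
      (∫ t, fracMonoR α t * (thetaFn p t) ^ β ∂μ₁) =
        ∫ t, fracMonoR α t * (thetaFn p t) ^ β ∂μ₂) :
    μ₁ = μ₂ := by
  classical
  -- continuity facts
  have hpc : ∀ k, Continuous (p k) := fun k => continuous_of_isRealFracPoly (hp k)
  have hD1 : ∀ t : NNVec n, 1 ≤ 1 + ∑ j, (t.1 j) ^ 2 + ∑ k, (p k t) ^ 2 := by
    intro t
    have h1 : 0 ≤ ∑ j, (t.1 j) ^ 2 := Finset.sum_nonneg fun j _ => sq_nonneg _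
    have h2 : 0 ≤ ∑ k, (p k t) ^ 2 := Finset.sum_nonneg fun k _ => sq_nonneg _
    linarith
  have hDpos : ∀ t : NNVec n, (0:ℝ) < 1 + ∑ j, (t.1 j) ^ 2 + ∑ k, (p k t) ^ 2 :=
    fun t => lt_of_lt_of_le one_pos (hD1 t)
  have hDc : Continuous (fun t : NNVec n => 1 + ∑ j, (t.1 j) ^ 2 + ∑ k, (p k t) ^ 2) := by
    apply Continuous.add
    · apply Continuous.add continuous_const
      exact continuous_finset_sum _ fun j _ =>
        ((continuous_apply j).comp continuous_subtype_val).pow 2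
    · exact continuous_finset_sum _ fun k _ => (hpc k).pow 2
  have hθc : Continuous (thetaFn p) := hDc.inv₀ fun t => (hDpos t).ne'
  have hθpos : ∀ t, 0 < thetaFn p t := fun t => inv_pos.mpr (hDpos t)
  have hθle : ∀ t, thetaFn p t ≤ 1 := fun t => inv_le_one_of_one_le₀ (hD1 t)
  have hmul : ∀ (t : NNVec n) (j : Fin n), t.1 j * thetaFn p t ∈ Set.Icc (0:ℝ) 1 := by
    intro t j
    refine ⟨mul_nonneg (t.2 j) (hθpos t).le, ?_⟩
    rw [thetaFn, mul_inv_le_iff₀ (hDpos t), one_mul]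
    have h1 : 0 ≤ ∑ k, (p k t) ^ 2 := Finset.sum_nonneg fun k _ => sq_nonneg _
    have h2 : (t.1 j) ^ 2 ≤ ∑ i, (t.1 i) ^ 2 :=
      Finset.single_le_sum (fun i _ => sq_nonneg (t.1 i)) (Finset.mem_univ j)
    nlinarith [sq_nonneg (t.1 j - 1)]
  -- finiteness of the measures
  have hone₁ : Integrable (fun _ : NNVec n => (1:ℝ)) μ₁ := by
    have h := hmom₁ ⟨0, fun j => le_refl 0⟩
    simpa [Real.rpow_zero] using h
  have hone₂ : Integrable (fun _ : NNVec n => (1:ℝ)) μ₂ := by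
    have h := hmom₂ ⟨0, fun j => le_refl 0⟩
    simpa [Real.rpow_zero] using h
  haveI hfin₁ : IsFiniteMeasure μ₁ :=
    (integrable_const_iff.mp hone₁).resolve_left one_ne_zero
  haveI hfin₂ : IsFiniteMeasure μ₂ :=
    (integrable_const_iff.mp hone₂).resolve_left one_ne_zero
  -- Polish space structure on NNVec n
  have hclosed : IsClosed {t : Fin n → ℝ | ∀ j, 0 ≤ t j} := by
    have : {t : Fin n → ℝ | ∀ j, 0 ≤ t j} = ⋂ j, {t | 0 ≤ t j} := by
      ext t; simp [Set.mem_iInter]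
    rw [this]
    exact isClosed_iInter fun j => isClosed_le continuous_const (continuous_apply j)
  haveI : PolishSpace (NNVec n) := hclosed.polishSpace
  haveI : BorelSpace (NNVec n) := Subtype.borelSpace {t : Fin n → ℝ | ∀ j, 0 ≤ t j}
  -- the compact target
  set K : Set ((Fin n → ℝ) × ℝ) :=
    (Set.univ.pi fun _ : Fin n => Set.Icc (0:ℝ) 1) ×ˢ Set.Icc (0:ℝ) 1 with hK
  have hKcomp : IsCompact K := (isCompact_univ_pi fun _ => isCompact_Icc).prod isCompact_Icc
  haveI : CompactSpace K := isCompact_iff_compactSpace.mp hKcomp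
  have hmem : ∀ t : NNVec n,
      ((fun j => t.1 j * thetaFn p t, thetaFn p t) : (Fin n → ℝ) × ℝ) ∈ K := by
    intro t
    exact ⟨Set.mem_univ_pi.mpr fun j => hmul t j, ⟨(hθpos t).le, hθle t⟩⟩
  set Φ : NNVec n → K := fun t => ⟨(fun j => t.1 j * thetaFn p t, thetaFn p t), hmem t⟩ with hΦ
  have hΦc : Continuous Φ := by
    apply Continuous.subtype_mk
    exact (continuous_pi fun j =>
      ((continuous_apply j).comp continuous_subtype_val).mul hθc).prodMk hθc
  have hΦi : Function.Injective Φ := by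
    intro t s h
    have h' := congrArg Subtype.val h
    have hθts : thetaFn p t = thetaFn p s := congrArg Prod.snd h'
    have h1 : ∀ j, t.1 j * thetaFn p t = s.1 j * thetaFn p s :=
      fun j => congrFun (congrArg Prod.fst h') j
    apply Subtype.ext; funext j
    have h2 := h1 j
    rw [hθts] at h2
    exact mul_right_cancel₀ (hθpos s).ne' h2
  have hΦe : MeasurableEmbedding Φ := hΦc.measurableEmbedding hΦi
  -- the subalgebra of C(K, ℝ)
  set cj : Fin n → C(K, ℝ) := fun j =>
    ⟨fun y => y.1.1 j, ((continuous_apply j).comp continuous_fst).comp continuous_subtype_val⟩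
    with hcj
  set w : C(K, ℝ) := ⟨fun y => y.1.2, continuous_snd.comp continuous_subtype_val⟩ with hw
  set S : Set C(K, ℝ) := Set.range cj ∪ {w} with hS
  set A : Subalgebra ℝ C(K, ℝ) := Algebra.adjoin ℝ S with hA
  have hsep : A.SeparatesPoints := by
    intro x y hxy
    by_cases h2 : x.1.2 = y.1.2
    · have h1 : x.1.1 ≠ y.1.1 := by
        intro h1; exact hxy (Subtype.ext (Prod.ext h1 h2))
      obtain ⟨j, hj⟩ := Function.ne_iff.mp h1
      exact ⟨cj j, ⟨cj j, Algebra.subset_adjoin (Or.inl ⟨j, rfl⟩), rfl⟩, hj⟩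
    · exact ⟨w, ⟨w, Algebra.subset_adjoin (Or.inr rfl), rfl⟩, h2⟩
  -- monomial representation
  have hmono : ∀ q ∈ Submonoid.closure S, ∃ (α : Fin n → ℚ) (β : ℕ), (∀ j, 0 ≤ α j) ∧
      ∀ t : NNVec n, q (Φ t) = fracMonoR α t * thetaFn p t ^ β := by
    intro q hq
    induction hq using Submonoid.closure_induction with
    | mem g hg =>
      rcases hg with ⟨j, rfl⟩ | rfl
      · refine ⟨fun i => if i = j then 1 else 0, 1,
          fun i => by by_cases h : i = j <;> simp [h], fun t => ?_⟩
        have hf : fracMonoR (fun i => if i = j then 1 else 0) t = t.1 j := by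
          unfold fracMonoR
          rw [Finset.prod_eq_single j]
          · simp
          · intro i _ hij; simp [hij]
          · simp
        simp [hcj, hΦ, hf]
      · exact ⟨0, 1, fun i => le_refl 0, fun t => by simp [hw, hΦ, fracMonoR_zero]⟩
    | one => exact ⟨0, 0, fun i => le_refl 0, fun t => by simp [fracMonoR_zero]⟩
    | mul x y hx hy ihx ihy =>
      obtain ⟨α, β, hα, hx'⟩ := ihx
      obtain ⟨α', β', hα', hy'⟩ := ihy
      refine ⟨α + α', β + β', fun j => add_nonneg (hα j) (hα' j), fun t => ?_⟩
      rw [ContinuousMap.mul_apply, hx' t, hy' t, fracMonoR_add α α' hα hα' t, pow_add]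
      ring
  -- integrability
  have hint : ∀ (q : C(K, ℝ)) (μ : Measure (NNVec n)), IsFiniteMeasure μ →
      Integrable (fun t => q (Φ t)) μ := by
    intro q μ hμ
    haveI := hμ
    refine Integrable.mono' (integrable_const ‖q‖)
      ((q.continuous.comp hΦc).aestronglyMeasurable) ?_
    exact Filter.Eventually.of_forall fun t => q.norm_coe_le_norm (Φ t)
  -- equality of integrals over the span
  have hspan : ∀ q ∈ Submodule.span ℝ ((Submonoid.closure S : Submonoid C(K, ℝ)) : Set C(K, ℝ)),
      ∫ t, q (Φ t) ∂μ₁ = ∫ t, q (Φ t) ∂μ₂ := by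
    intro q hq
    induction hq using Submodule.span_induction with
    | mem g hg =>
      obtain ⟨α, β, hα, hrep⟩ := hmono g hg
      calc ∫ t, g (Φ t) ∂μ₁ = ∫ t, fracMonoR α t * thetaFn p t ^ β ∂μ₁ :=
            integral_congr_ae (Filter.Eventually.of_forall fun t => hrep t)
        _ = ∫ t, fracMonoR α t * thetaFn p t ^ β ∂μ₂ := hδ α hα β
        _ = ∫ t, g (Φ t) ∂μ₂ :=
            (integral_congr_ae (Filter.Eventually.of_forall fun t => hrep t)).symm
    | zero => simp
    | add x y hx hy ihx ihy =>
      simp only [ContinuousMap.add_apply]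
      rw [integral_add (hint x μ₁ hfin₁) (hint y μ₁ hfin₁),
        integral_add (hint x μ₂ hfin₂) (hint y μ₂ hfin₂), ihx, ihy]
    | smul c x hx ihx =>
      simp only [ContinuousMap.smul_apply, smul_eq_mul]
      rw [integral_const_mul, integral_const_mul, ihx]
  have hAint : ∀ q ∈ A, ∫ t, q (Φ t) ∂μ₁ = ∫ t, q (Φ t) ∂μ₂ := by
    intro q hq
    refine hspan q ?_
    have : q ∈ Subalgebra.toSubmodule (Algebra.adjoin ℝ S) := hq
    rwa [Algebra.adjoin_eq_span] at this
  -- approximation step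
  have key : ∀ g : C(K, ℝ), ∫ t, g (Φ t) ∂μ₁ = ∫ t, g (Φ t) ∂μ₂ := by
    intro g
    set M : ℝ := (μ₁ Set.univ).toReal + (μ₂ Set.univ).toReal with hM
    have hM0 : 0 ≤ M := add_nonneg ENNReal.toReal_nonneg ENNReal.toReal_nonneg
    have hbound : ∀ ε > (0:ℝ),
        |∫ t, g (Φ t) ∂μ₁ - ∫ t, g (Φ t) ∂μ₂| ≤ ε * M := by
      intro ε hε
      obtain ⟨q, hq⟩ :=
        ContinuousMap.exists_mem_subalgebra_near_continuousMap_of_separatesPoints A hsep g ε hε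
      have hqA := hAint (q : C(K, ℝ)) q.2
      have est : ∀ (μ : Measure (NNVec n)) (hμ : IsFiniteMeasure μ),
          ‖∫ t, g (Φ t) ∂μ - ∫ t, (q : C(K, ℝ)) (Φ t) ∂μ‖ ≤ ε * (μ Set.univ).toReal := by
        intro μ hμ
        haveI := hμ
        rw [← integral_sub (hint g μ hμ) (hint (q : C(K, ℝ)) μ hμ)]
        apply norm_integral_le_of_norm_le_const
        refine Filter.Eventually.of_forall fun t => ?_
        have h1 : g (Φ t) - (q : C(K, ℝ)) (Φ t) = (g - (q : C(K, ℝ))) (Φ t) := by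
          simp [ContinuousMap.sub_apply]
        rw [h1]
        calc ‖(g - (q : C(K, ℝ))) (Φ t)‖ ≤ ‖g - (q : C(K, ℝ))‖ :=
              ContinuousMap.norm_coe_le_norm _ _
          _ = ‖(q : C(K, ℝ)) - g‖ := norm_sub_rev _ _
          _ ≤ ε := hq.le
      have e1 := est μ₁ hfin₁
      have e2 := est μ₂ hfin₂
      have habs : |∫ t, g (Φ t) ∂μ₁ - ∫ t, g (Φ t) ∂μ₂| ≤
          ‖∫ t, g (Φ t) ∂μ₁ - ∫ t, (q : C(K, ℝ)) (Φ t) ∂μ₁‖ +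
          ‖∫ t, g (Φ t) ∂μ₂ - ∫ t, (q : C(K, ℝ)) (Φ t) ∂μ₂‖ := by
        rw [Real.norm_eq_abs, Real.norm_eq_abs]
        rw [hqA]
        have : ∫ t, g (Φ t) ∂μ₁ - ∫ t, g (Φ t) ∂μ₂ =
            (∫ t, g (Φ t) ∂μ₁ - ∫ t, (q : C(K, ℝ)) (Φ t) ∂μ₂) -
            (∫ t, g (Φ t) ∂μ₂ - ∫ t, (q : C(K, ℝ)) (Φ t) ∂μ₂) := by ring
        rw [this]
        exact abs_sub _ _
      calc |∫ t, g (Φ t) ∂μ₁ - ∫ t, g (Φ t) ∂μ₂| ≤ _ := habs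
        _ ≤ ε * (μ₁ Set.univ).toReal + ε * (μ₂ Set.univ).toReal := add_le_add e1 e2
        _ = ε * M := by rw [hM]; ring
    by_contra hne
    set d : ℝ := |∫ t, g (Φ t) ∂μ₁ - ∫ t, g (Φ t) ∂μ₂| with hd
    have hdpos : 0 < d := abs_pos.mpr (sub_ne_zero.mpr hne)
    have h := hbound (d / (2 * (M + 1))) (by positivity)
    have hlt : d / (2 * (M + 1)) * M < d := by
      rw [div_mul_eq_mul_div, div_lt_iff₀ (by positivity)]
      nlinarith
    linarith
  -- equality of pushforward measures
  have hmap : Measure.map Φ μ₁ = Measure.map Φ μ₂ := by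
    haveI : IsFiniteMeasure (Measure.map Φ μ₁) :=
      ⟨by rw [Measure.map_apply hΦe.measurable MeasurableSet.univ]
          exact measure_lt_top μ₁ _⟩
    apply ext_of_forall_lintegral_eq_of_IsFiniteMeasure
    intro f
    have hfm : Measurable fun y : ↥K => ((f y : NNReal) : ENNReal) :=
      measurable_coe_nnreal_ennreal.comp f.continuous.measurable
    rw [lintegral_map hfm hΦe.measurable, lintegral_map hfm hΦe.measurable]
    set g : C(K, ℝ) := ⟨fun y => (f y : ℝ), NNReal.continuous_coe.comp f.continuous⟩ with hg
    have h1 : Integrable (fun t => ((f (Φ t) : NNReal) : ℝ)) μ₁ := hint g μ₁ hfin₁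
    have h2 : Integrable (fun t => ((f (Φ t) : NNReal) : ℝ)) μ₂ := hint g μ₂ hfin₂
    rw [lintegral_coe_eq_integral _ h1, lintegral_coe_eq_integral _ h2]
    exact congrArg ENNReal.ofReal (key g)
  -- conclude
  ext s hs
  have h1 := congrArg (fun ν : Measure K => ν (Φ '' s)) hmap
  try simp only at h1
  rwa [hΦe.map_apply, hΦe.map_apply, hΦi.preimage_image] at h1
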